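/- If A is a real symmetric n×n matrix that is conditionally negative definite with nonnegative entries, then for every α with 0 ≤ α ≤ 1 the entrywise power A^{∘α} (with entries A_{ij}^α) is conditionally negative definite. -/

import Mathlib

open Finset

namespace CndAux

variable {n : ℕ}

open scoped MatrixOrder in
lemma exists_fact (B : Matrix (Fin n) (Fin n) ℝ) (hsym : ∀ i j, B i j = B j i)
    (hq : ∀ w : Fin n → ℝ, 0 ≤ ∑ i, ∑ j, w i * B i j * w j) :
    ∃ M : Matrix (Fin n) (Fin n) ℝ, ∀ i j, B i j = ∑ r, M r i * M r j := by
  have hpsd : B.PosSemidef := by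
    refine Matrix.posSemidef_iff_dotProduct_mulVec.mpr ⟨?_, ?_⟩
    · ext i j
      simp [Matrix.conjTranspose_apply, hsym i j]
    · intro x
      have h := hq x
      simpa [dotProduct, Matrix.mulVec, Finset.mul_sum, mul_assoc] using h
  have h0 : 0 ≤ B := hpsd.nonneg
  have hM : CFC.sqrt B * CFC.sqrt B = B := CFC.sqrt_mul_sqrt_self B h0
  have hS : star (CFC.sqrt B) = CFC.sqrt B := (CFC.sqrt_nonneg B).isSelfAdjoint.star_eq
  refine ⟨CFC.sqrt B, fun i j => ?_⟩
  have h := congrFun (congrFun hM i) j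
  have hS' : ∀ a b, CFC.sqrt B a b = CFC.sqrt B b a := fun a b => by
    have := congrFun (congrFun hS a) b
    simpa [Matrix.star_apply] using this.symm
  rw [← h, Matrix.mul_apply]
  exact Finset.sum_congr rfl fun r _ => by rw [hS' i r]

lemma schur (B C : Matrix (Fin n) (Fin n) ℝ)
    (M : Matrix (Fin n) (Fin n) ℝ) (hfact : ∀ i j, B i j = ∑ r, M r i * M r j)
    (hC : ∀ w : Fin n → ℝ, 0 ≤ ∑ i, ∑ j, w i * C i j * w j)
    (w : Fin n → ℝ) : 0 ≤ ∑ i, ∑ j, w i * (B i j * C i j) * w j := by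
  have key : ∑ i, ∑ j, w i * (B i j * C i j) * w j
      = ∑ r, ∑ i, ∑ j, (w i * M r i) * C i j * (w j * M r j) := by
    calc ∑ i, ∑ j, w i * (B i j * C i j) * w j
        = ∑ i, ∑ j, ∑ r, (w i * M r i) * C i j * (w j * M r j) := by
          refine Finset.sum_congr rfl fun i _ => Finset.sum_congr rfl fun j _ => ?_
          rw [hfact i j, Finset.sum_mul, Finset.mul_sum, Finset.sum_mul]
          exact Finset.sum_congr rfl fun r _ => by ring
      _ = ∑ i, ∑ r, ∑ j, (w i * M r i) * C i j * (w j * M r j) :=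
          Finset.sum_congr rfl fun i _ => Finset.sum_comm
      _ = ∑ r, ∑ i, ∑ j, (w i * M r i) * C i j * (w j * M r j) := Finset.sum_comm
  rw [key]
  exact Finset.sum_nonneg fun r _ => hC fun i => w i * M r i

lemma hadamard_pow (B : Matrix (Fin n) (Fin n) ℝ) (hsym : ∀ i j, B i j = B j i)
    (hq : ∀ w : Fin n → ℝ, 0 ≤ ∑ i, ∑ j, w i * B i j * w j) (m : ℕ)
    (w : Fin n → ℝ) : 0 ≤ ∑ i, ∑ j, w i * (B i j ^ m) * w j := by
  obtain ⟨M, hM⟩ := exists_fact B hsym hq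
  induction m generalizing w with
  | zero =>
      simp only [pow_zero, mul_one]
      have h : ∑ i, ∑ j, w i * w j = (∑ i, w i) * (∑ j, w j) :=
        (Finset.sum_mul_sum _ _ _ _).symm
      rw [h]
      exact mul_self_nonneg _
  | succ m ih =>
      have h := schur B (fun i j => B i j ^ m) M hM (fun v => ih v) w
      simp only [pow_succ]
      have e : ∀ i j, w i * (B i j ^ m * B i j) * w j = w i * (B i j * B i j ^ m) * w j :=
        fun i j => by ring
      simp only [e]
      exact h

lemma exp_quadform (B : Matrix (Fin n) (Fin n) ℝ) (hsym : ∀ i j, B i j = B j i)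
    (hq : ∀ w : Fin n → ℝ, 0 ≤ ∑ i, ∑ j, w i * B i j * w j)
    (w : Fin n → ℝ) : 0 ≤ ∑ i, ∑ j, w i * Real.exp (B i j) * w j := by
  have hexp : ∀ x : ℝ, Real.exp x = ∑' m : ℕ, x ^ m / m.factorial := by
    intro x
    rw [Real.exp_eq_exp_ℝ, NormedSpace.exp_eq_tsum ℝ]
    exact tsum_congr fun m => by rw [smul_eq_mul, div_eq_inv_mul]
  have hsummable : ∀ p : Fin n × Fin n,
      Summable (fun m : ℕ => w p.1 * (B p.1 p.2 ^ m / m.factorial) * w p.2) := fun p =>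
    ((Real.summable_pow_div_factorial (B p.1 p.2)).mul_left (w p.1)).mul_right (w p.2)
  have key : ∑ i, ∑ j, w i * Real.exp (B i j) * w j
      = ∑' m : ℕ, ∑ p : Fin n × Fin n, w p.1 * (B p.1 p.2 ^ m / m.factorial) * w p.2 := by
    calc ∑ i, ∑ j, w i * Real.exp (B i j) * w j
        = ∑ p : Fin n × Fin n, w p.1 * Real.exp (B p.1 p.2) * w p.2 :=
          (Fintype.sum_prod_type (f := fun p : Fin n × Fin n => w p.1 * Real.exp (B p.1 p.2) * w p.2)).symm
      _ = ∑ p : Fin n × Fin n, ∑' m : ℕ, w p.1 * (B p.1 p.2 ^ m / m.factorial) * w p.2 := by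
          refine Finset.sum_congr rfl fun p _ => ?_
          rw [hexp, ← tsum_mul_left, ← tsum_mul_right]
      _ = ∑' m : ℕ, ∑ p : Fin n × Fin n, w p.1 * (B p.1 p.2 ^ m / m.factorial) * w p.2 :=
          (Summable.tsum_finsetSum fun p _ => hsummable p).symm
  rw [key]
  refine tsum_nonneg fun m => ?_
  have e : ∑ p : Fin n × Fin n, w p.1 * (B p.1 p.2 ^ m / m.factorial) * w p.2
      = (∑ i, ∑ j, w i * B i j ^ m * w j) * ((m.factorial : ℝ))⁻¹ := by
    rw [Fintype.sum_prod_type, Finset.sum_mul]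
    refine Finset.sum_congr rfl fun i _ => ?_
    rw [Finset.sum_mul]
    exact Finset.sum_congr rfl fun j _ => by ring
  rw [e]
  exact mul_nonneg (hadamard_pow B hsym hq m w) (by positivity)

lemma schoenberg (hn : 0 < n) (A : Matrix (Fin n) (Fin n) ℝ) (hA : ∀ i j, A i j = A j i)
    (hcnd : ∀ z : Fin n → ℝ, (∑ i, z i) = 0 → ∑ i, ∑ j, z i * A i j * z j ≤ 0)
    (t : ℝ) (ht : 0 ≤ t) (z : Fin n → ℝ) :
    0 ≤ ∑ i, ∑ j, z i * Real.exp (-(t * A i j)) * z j := by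
  classical
  set k : Fin n := ⟨0, hn⟩ with hk
  set B : Matrix (Fin n) (Fin n) ℝ :=
    fun i j => t * (A i k + A j k - A i j - A k k) with hB
  have hBsym : ∀ i j, B i j = B j i := by
    intro i j
    simp only [hB]
    rw [hA i j]
    ring
  -- helper : sum of an ite over the index
  have hite : ∀ (f : Fin n → ℝ), ∑ i, (if i = k then f i else 0) = f k := by
    intro f
    rw [Finset.sum_ite_eq' Finset.univ k f]
    simp
  have hBq : ∀ x : Fin n → ℝ, 0 ≤ ∑ i, ∑ j, x i * B i j * x j := by
    intro x
    set s : ℝ := ∑ i, x i with hs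
    set y : Fin n → ℝ := fun i => x i - s * (if i = k then 1 else 0) with hy
    have hysum : ∑ i, y i = 0 := by
      simp only [hy]
      rw [Finset.sum_sub_distrib, ← Finset.mul_sum]
      have : ∑ i, (if i = k then (1 : ℝ) else 0) = 1 := by
        rw [hite (fun _ => (1 : ℝ))]
      rw [this, mul_one, ← hs, sub_self]
    have h1 := hcnd y hysum
    -- expand Q_A y
    have hyA : ∀ i j, y i * A i j * y j
        = x i * A i j * x j - s * (if i = k then A i j * x j else 0)
          - s * (if j = k then x i * A i j else 0)
          + (s * s) * (if i = k then (if j = k then A i j else 0) else 0) := by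
      intro i j
      by_cases hi : i = k <;> by_cases hj : j = k <;> simp [hy, hi, hj] <;> ring
    have hQy : ∑ i, ∑ j, y i * A i j * y j
        = ∑ i, ∑ j, x i * A i j * x j - s * (∑ j, A k j * x j)
          - s * (∑ i, x i * A i k) + (s * s) * A k k := by
      simp only [hyA]
      rw [Finset.sum_congr rfl (fun i _ => by
        rw [Finset.sum_add_distrib, Finset.sum_sub_distrib, Finset.sum_sub_distrib,
          ← Finset.mul_sum, ← Finset.mul_sum, ← Finset.mul_sum])]
      rw [Finset.sum_add_distrib, Finset.sum_sub_distrib, Finset.sum_sub_distrib]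
      congr 1
      · congr 1
        · congr 1
          · -- ∑ i, s * ∑ j (if i = k ...) : inner if independent of j
            rw [← Finset.mul_sum]
            congr 1
            have : ∀ i : Fin n, ∑ j, (if i = k then A i j * x j else 0)
                = (if i = k then ∑ j, A i j * x j else 0) := by
              intro i; split <;> simp
            rw [Finset.sum_congr rfl (fun i _ => this i), hite]
        · rw [← Finset.mul_sum]
          congr 1
          rw [Finset.sum_congr rfl (fun i _ => hite (fun j => x i * A i j))]
      · rw [← Finset.mul_sum]
        congr 1
        have : ∀ i : Fin n, ∑ j, (if i = k then (if j = k then A i j else 0) else 0)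
            = (if i = k then A i k else 0) := by
          intro i
          split
          · exact hite _
          · simp
        rw [Finset.sum_congr rfl (fun i _ => this i), hite]
    -- Q_B x in terms of Q_A x
    have hQB : ∑ i, ∑ j, x i * B i j * x j
        = t * (s * (∑ i, x i * A i k) + s * (∑ j, A k j * x j)
            - (∑ i, ∑ j, x i * A i j * x j) - (s * s) * A k k) := by
      have e0 : ∀ i j, x i * (A i k + A j k - A i j - A k k) * x j =
          (x i * A i k) * x j + x i * (A k j * x j) - x i * A i j * x j
            - x i * (x j * A k k) := by
        intro i j
        rw [← hA j k]
        ring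
      have hS1 : ∑ i, ∑ j, (x i * A i k) * x j = (∑ i, x i * A i k) * s :=
        (Finset.sum_mul_sum _ _ _ _).symm
      have hS2 : ∑ i, ∑ j, x i * (A k j * x j) = s * ∑ j, A k j * x j :=
        (Finset.sum_mul_sum _ _ _ _).symm
      have hS4 : ∑ i, ∑ j, x i * (x j * A k k) = s * (s * A k k) := by
        have h4 : ∑ j, x j * A k k = s * A k k := by rw [← Finset.sum_mul]
        rw [(Finset.sum_mul_sum _ _ _ _).symm, h4]
      have hQ0 : ∑ i, ∑ j, x i * (A i k + A j k - A i j - A k k) * x j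
          = s * (∑ i, x i * A i k) + s * (∑ j, A k j * x j)
            - (∑ i, ∑ j, x i * A i j * x j) - (s * s) * A k k := by
        calc ∑ i, ∑ j, x i * (A i k + A j k - A i j - A k k) * x j
            = ∑ i, ((∑ j, (x i * A i k) * x j) + (∑ j, x i * (A k j * x j))
                - (∑ j, x i * A i j * x j) - (∑ j, x i * (x j * A k k))) := by
              refine Finset.sum_congr rfl fun i _ => ?_
              rw [Finset.sum_congr rfl (fun j _ => e0 i j), Finset.sum_sub_distrib,
                Finset.sum_sub_distrib, Finset.sum_add_distrib]
          _ = (∑ i, ∑ j, (x i * A i k) * x j) + (∑ i, ∑ j, x i * (A k j * x j))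
                - (∑ i, ∑ j, x i * A i j * x j) - (∑ i, ∑ j, x i * (x j * A k k)) := by
              rw [Finset.sum_sub_distrib, Finset.sum_sub_distrib, Finset.sum_add_distrib]
          _ = s * (∑ i, x i * A i k) + s * (∑ j, A k j * x j)
                - (∑ i, ∑ j, x i * A i j * x j) - (s * s) * A k k := by
              rw [hS1, hS2, hS4]; ring
      calc ∑ i, ∑ j, x i * B i j * x j
          = t * ∑ i, ∑ j, x i * (A i k + A j k - A i j - A k k) * x j := by
            rw [Finset.mul_sum]
            refine Finset.sum_congr rfl fun i _ => ?_
            rw [Finset.mul_sum]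
            refine Finset.sum_congr rfl fun j _ => ?_
            simp only [hB]
            ring
        _ = t * (s * (∑ i, x i * A i k) + s * (∑ j, A k j * x j)
              - (∑ i, ∑ j, x i * A i j * x j) - (s * s) * A k k) := by rw [hQ0]
    rw [hQy] at h1
    rw [hQB]
    refine mul_nonneg ht ?_
    linarith
  -- now the exponential trick
  have key : ∀ i j, z i * Real.exp (-(t * A i j)) * z j
      = Real.exp (t * A k k) *
        ((z i * Real.exp (-(t * A i k))) * Real.exp (B i j)
          * (z j * Real.exp (-(t * A j k)))) := by
    intro i j
    have harg : -(t * A i j) = t * A k k + (-(t * A i k) + B i j + -(t * A j k)) := by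
      simp only [hB]; ring
    rw [harg, Real.exp_add, Real.exp_add, Real.exp_add]
    ring
  calc (0:ℝ) ≤ Real.exp (t * A k k) *
      ∑ i, ∑ j, (fun i => z i * Real.exp (-(t * A i k))) i * Real.exp (B i j)
        * (fun i => z i * Real.exp (-(t * A i k))) j := by
        exact mul_nonneg (Real.exp_nonneg _)
          (exp_quadform B hBsym hBq (fun i => z i * Real.exp (-(t * A i k))))
    _ = ∑ i, ∑ j, z i * Real.exp (-(t * A i j)) * z j := by
        rw [Finset.mul_sum]
        refine Finset.sum_congr rfl fun i _ => ?_
        rw [Finset.mul_sum]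
        refine Finset.sum_congr rfl fun j _ => ?_
        rw [key i j]

open MeasureTheory Set in
lemma rep (α : ℝ) (h0 : 0 < α) (h1 : α < 1) :
    ∃ c : ℝ, 0 < c ∧ ∀ x : ℝ, 0 < x →
      IntegrableOn (fun t => (1 - Real.exp (-(t * x))) * t ^ (-1 - α)) (Ioi (0:ℝ)) ∧
      ∫ t in Ioi (0:ℝ), (1 - Real.exp (-(t * x))) * t ^ (-1 - α) = c * x ^ α := by
  set K : ℝ → ℝ := fun s => (1 - Real.exp (-s)) * s ^ (-1 - α) with hK
  have hcont : ContinuousOn K (Ioi 0) := by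
    refine ContinuousOn.mul ?_ ?_
    · exact (continuous_const.sub (Real.continuous_exp.comp continuous_neg)).continuousOn
    · intro s hs
      exact (Real.continuousAt_rpow_const s _ (Or.inl (ne_of_gt hs))).continuousWithinAt
  have hKnonneg : ∀ s : ℝ, 0 < s → 0 ≤ K s := by
    intro s hs
    refine mul_nonneg (sub_nonneg.mpr ?_) (Real.rpow_nonneg hs.le _)
    exact Real.exp_le_one_iff.mpr (by linarith)
  have hKpos : ∀ s : ℝ, 0 < s → 0 < K s := by
    intro s hs
    refine mul_pos (sub_pos.mpr ?_) (Real.rpow_pos_of_pos hs _)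
    exact Real.exp_lt_one_iff.mpr (by linarith)
  have int1 : IntegrableOn K (Ioc 0 1) := by
    refine Integrable.mono' (g := fun s => s ^ (-α)) ?_ ?_ ?_
    · exact (intervalIntegral.intervalIntegrable_rpow' (by linarith)).1
    · exact (hcont.mono Ioc_subset_Ioi_self).aestronglyMeasurable measurableSet_Ioc
    · filter_upwards [ae_restrict_mem measurableSet_Ioc] with s hs
      have hs0 : 0 < s := hs.1
      rw [Real.norm_of_nonneg (hKnonneg s hs0)]
      have hle : 1 - Real.exp (-s) ≤ s := by
        have := Real.add_one_le_exp (-s)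
        linarith
      have : K s ≤ s * s ^ (-1 - α) := by
        exact mul_le_mul_of_nonneg_right hle (Real.rpow_nonneg hs0.le _)
      refine this.trans_eq ?_
      rw [show (-α : ℝ) = 1 + (-1 - α) by ring, Real.rpow_add hs0, Real.rpow_one]
  have int2 : IntegrableOn K (Ioi 1) := by
    refine Integrable.mono' (g := fun s => s ^ (-1 - α)) ?_ ?_ ?_
    · exact integrableOn_Ioi_rpow_of_lt (by linarith) zero_lt_one
    · exact (hcont.mono (Ioi_subset_Ioi zero_le_one)).aestronglyMeasurable measurableSet_Ioi
    · filter_upwards [ae_restrict_mem measurableSet_Ioi] with s hs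
      have hs0 : (0:ℝ) < s := lt_trans zero_lt_one hs
      rw [Real.norm_of_nonneg (hKnonneg s hs0)]
      have hle : 1 - Real.exp (-s) ≤ 1 := by
        have := Real.exp_nonneg (-s)
        linarith
      calc K s ≤ 1 * s ^ (-1 - α) :=
            mul_le_mul_of_nonneg_right hle (Real.rpow_nonneg hs0.le _)
        _ = s ^ (-1 - α) := one_mul _
  have hint : IntegrableOn K (Ioi 0) := by
    rw [← Ioc_union_Ioi_eq_Ioi (zero_le_one : (0:ℝ) ≤ 1)]
    exact int1.union int2
  set c : ℝ := ∫ s in Ioi (0:ℝ), K s with hc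
  have hnn : 0 ≤ᵐ[volume.restrict (Ioi (0:ℝ))] K := by
    filter_upwards [ae_restrict_mem measurableSet_Ioi] with s hs
    exact hKnonneg s hs
  have hcpos : 0 < c := by
    rw [hc]
    refine (setIntegral_pos_iff_support_of_nonneg_ae hnn hint).mpr ?_
    have hsub : Ioi (0:ℝ) ⊆ Function.support K ∩ Ioi 0 :=
      fun s hs => ⟨ne_of_gt (hKpos s hs), hs⟩
    calc (0:ENNReal) < volume (Ioi (0:ℝ)) := by
          rw [Real.volume_Ioi]; exact ENNReal.zero_lt_top
      _ ≤ volume (Function.support K ∩ Ioi 0) := measure_mono hsub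
  refine ⟨c, hcpos, fun x hx => ?_⟩
  have hcomp : IntegrableOn (fun t => K (x * t)) (Ioi 0) := by
    rw [integrableOn_Ioi_comp_mul_left_iff K 0 hx, mul_zero]
    exact hint
  have heq : EqOn (fun t => (1 - Real.exp (-(t * x))) * t ^ (-1 - α))
      (fun t => x ^ (1 + α) * K (x * t)) (Ioi 0) := by
    intro t ht
    have ht0 : (0:ℝ) < t := ht
    simp only [hK]
    rw [mul_comm x t, Real.mul_rpow ht0.le hx.le]
    have hxx : x ^ (1 + α) * x ^ (-1 - α) = 1 := by
      rw [← Real.rpow_add hx, show (1 + α + (-1 - α) : ℝ) = 0 by ring, Real.rpow_zero]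
    rw [show x ^ (1 + α) * ((1 - Real.exp (-(t * x))) * (t ^ (-1 - α) * x ^ (-1 - α)))
        = (1 - Real.exp (-(t * x))) * t ^ (-1 - α) * (x ^ (1 + α) * x ^ (-1 - α)) by ring,
      hxx, mul_one]
  constructor
  · have h2 : IntegrableOn (fun t => x ^ (1 + α) * K (x * t)) (Ioi 0) :=
      hcomp.const_mul _
    exact h2.congr_fun (fun t ht => (heq ht).symm) measurableSet_Ioi
  · rw [setIntegral_congr_fun measurableSet_Ioi heq]
    rw [MeasureTheory.integral_const_mul]
    rw [MeasureTheory.integral_comp_mul_left_Ioi K 0 hx, mul_zero]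
    rw [smul_eq_mul, ← hc]
    rw [show x⁻¹ = x ^ (-1 : ℝ) by rw [Real.rpow_neg_one]]
    rw [← mul_assoc, ← Real.rpow_add hx, show (1 + α + -1 : ℝ) = α by ring]
    ring


end CndAux

set_option maxHeartbeats 1000000 in
open CndAux MeasureTheory Set in
/-- conditional negative definiteness of a symmetric matrix with
nonnegative entries is preserved under entrywise powers with exponent in `[0,1]`. -/
theorem cond_neg_def_entrywise_pow (n : ℕ) (A : Matrix (Fin n) (Fin n) ℝ)
    (hA : A.IsSymm) (hpos : ∀ i j, 0 ≤ A i j)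
    (hcnd : ∀ z : Fin n → ℝ, (∑ i, z i) = 0 → ∑ i, ∑ j, z i * A i j * z j ≤ 0)
    (α : ℝ) (hα0 : 0 ≤ α) (hα1 : α ≤ 1) :
    ∀ z : Fin n → ℝ, (∑ i, z i) = 0 →
      ∑ i, ∑ j, z i * (A i j) ^ α * z j ≤ 0 := by
  intro z hz
  have hAsym : ∀ i j, A i j = A j i := fun i j => by
    have := congrFun (congrFun hA j) i
    simpa [Matrix.transpose_apply] using this
  rcases eq_or_lt_of_le hα0 with h0 | h0
  · -- α = 0
    subst h0
    have : ∑ i, ∑ j, z i * (A i j) ^ (0:ℝ) * z j = (∑ i, z i) * (∑ j, z j) := by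
      rw [Finset.sum_mul_sum]
      exact Finset.sum_congr rfl fun i _ => Finset.sum_congr rfl fun j _ => by
        rw [Real.rpow_zero]; ring
    rw [this, hz, zero_mul]
  rcases eq_or_lt_of_le hα1 with h1 | h1
  · -- α = 1
    subst h1
    have : ∑ i, ∑ j, z i * (A i j) ^ (1:ℝ) * z j = ∑ i, ∑ j, z i * A i j * z j := by
      refine Finset.sum_congr rfl fun i _ => Finset.sum_congr rfl fun j _ => ?_
      rw [Real.rpow_one]
    rw [this]
    exact hcnd z hz
  -- 0 < α < 1
  rcases Nat.eq_zero_or_pos n with hn | hn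
  · subst hn
    simp
  obtain ⟨c, hc, hrep⟩ := rep α h0 h1
  set F : Fin n → Fin n → ℝ → ℝ := fun i j t =>
    z i * z j * ((1 - Real.exp (-(t * A i j))) * t ^ (-1 - α)) with hF
  have hFint : ∀ i j, IntegrableOn (F i j) (Ioi 0) := by
    intro i j
    rcases eq_or_lt_of_le (hpos i j) with h | h
    · have : F i j = fun _ => 0 := by
        funext t
        simp [hF, ← h]
      rw [this]
      exact integrableOn_zero
    · exact Integrable.const_mul (hrep _ h).1 (z i * z j)
  have hFeval : ∀ i j, ∫ t in Ioi (0:ℝ), F i j t = z i * z j * (c * A i j ^ α) := by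
    intro i j
    rcases eq_or_lt_of_le (hpos i j) with h | h
    · have h2 : F i j = fun _ => 0 := by
        funext t
        simp [hF, ← h]
      rw [h2, ← h, Real.zero_rpow (ne_of_gt h0)]
      simp
    · rw [show (∫ t in Ioi (0:ℝ), F i j t)
          = ∫ t in Ioi (0:ℝ), (z i * z j) *
              ((1 - Real.exp (-(t * A i j))) * t ^ (-1 - α)) from rfl,
        MeasureTheory.integral_const_mul, (hrep _ h).2]
  have hsum : ∫ t in Ioi (0:ℝ), (∑ i, ∑ j, F i j t)
      = ∑ i, ∑ j, (z i * z j * (c * A i j ^ α)) := by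
    rw [MeasureTheory.integral_finset_sum _
      (fun i _ => integrable_finset_sum _ (fun j _ => hFint i j))]
    refine Finset.sum_congr rfl fun i _ => ?_
    rw [MeasureTheory.integral_finset_sum _ (fun j _ => hFint i j)]
    exact Finset.sum_congr rfl fun j _ => hFeval i j
  have hzz : ∑ i, ∑ j, z i * z j = 0 := by
    have : ∑ i, ∑ j, z i * z j = (∑ i, z i) * (∑ j, z j) :=
      (Finset.sum_mul_sum _ _ _ _).symm
    rw [this, hz, zero_mul]
  have hptwise : ∀ t ∈ Ioi (0:ℝ), (∑ i, ∑ j, F i j t) ≤ 0 := by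
    intro t ht
    have ht0 : (0:ℝ) < t := ht
    have hG : 0 ≤ ∑ i, ∑ j, z i * Real.exp (-(t * A i j)) * z j :=
      schoenberg hn A hAsym hcnd t ht0.le z
    have e1 : ∀ i j : Fin n, F i j t
        = (z i * z j - z i * Real.exp (-(t * A i j)) * z j) * t ^ (-1 - α) := by
      intro i j; simp only [hF]; ring
    have hexpand : ∑ i, ∑ j, F i j t
        = ((∑ i, ∑ j, z i * z j) - ∑ i, ∑ j, z i * Real.exp (-(t * A i j)) * z j)
            * t ^ (-1 - α) := by
      calc ∑ i, ∑ j, F i j t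
          = ∑ i, ∑ j, (z i * z j - z i * Real.exp (-(t * A i j)) * z j) * t ^ (-1 - α) :=
            Finset.sum_congr rfl fun i _ => Finset.sum_congr rfl fun j _ => e1 i j
        _ = ∑ i, (∑ j, (z i * z j - z i * Real.exp (-(t * A i j)) * z j)) * t ^ (-1 - α) :=
            Finset.sum_congr rfl fun i _ => (Finset.sum_mul _ _ _).symm
        _ = (∑ i, ∑ j, (z i * z j - z i * Real.exp (-(t * A i j)) * z j)) * t ^ (-1 - α) :=
            (Finset.sum_mul _ _ _).symm
        _ = ((∑ i, ∑ j, z i * z j) - ∑ i, ∑ j, z i * Real.exp (-(t * A i j)) * z j)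
              * t ^ (-1 - α) := by
            rw [Finset.sum_congr rfl fun i (_ : i ∈ Finset.univ) => Finset.sum_sub_distrib _ _,
              Finset.sum_sub_distrib]
    rw [hexpand, hzz, zero_sub]
    exact mul_nonpos_of_nonpos_of_nonneg (neg_nonpos.mpr hG) (Real.rpow_nonneg ht0.le _)
  have hneg : ∫ t in Ioi (0:ℝ), (∑ i, ∑ j, F i j t) ≤ 0 := by
    refine integral_nonpos_of_ae ?_
    filter_upwards [ae_restrict_mem (measurableSet_Ioi : MeasurableSet (Ioi (0:ℝ)))]
      with t ht using hptwise t ht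
  rw [hsum] at hneg
  have hfinal : ∑ i, ∑ j, (z i * z j * (c * A i j ^ α))
      = c * ∑ i, ∑ j, z i * A i j ^ α * z j := by
    rw [Finset.mul_sum]
    refine Finset.sum_congr rfl fun i _ => ?_
    rw [Finset.mul_sum]
    exact Finset.sum_congr rfl fun j _ => by ring
  rw [hfinal] at hneg
  by_contra hcon
  push_neg at hcon
  nlinarith
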